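/- For the vector field Y3ᵃ = (q3, q1, q2, p3, p1, p2) on ℝ⁶, the function Y3ᵃ(H) (the directional derivative of H along Y3ᵃ) equals (1/2)J2² − H, where J2 = p1 + p2 + p3. -/

import Mathlib

open scoped BigOperators

/-- Partial derivative of a function on phase space ℝ⁶ in the i-th coordinate. -/
noncomputable def pd (i : Fin 6) (f : (Fin 6 → ℝ) → ℝ) (x : Fin 6 → ℝ) : ℝ :=
  fderiv ℝ f x (Pi.single i 1)

/-- Canonical Poisson bracket on ℝ⁶ with coordinates (q1,q2,q3,p1,p2,p3). -/
noncomputable def pb (F G : (Fin 6 → ℝ) → ℝ) (x : Fin 6 → ℝ) : ℝ :=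
  (pd 0 F x * pd 3 G x - pd 3 F x * pd 0 G x) +
  (pd 1 F x * pd 4 G x - pd 4 F x * pd 1 G x) +
  (pd 2 F x * pd 5 G x - pd 5 F x * pd 2 G x)

/-- Angular momentum components: L1 = q2 p3 − q3 p2, etc. -/
def L1 (x : Fin 6 → ℝ) : ℝ := x 1 * x 5 - x 2 * x 4
def L2 (x : Fin 6 → ℝ) : ℝ := x 2 * x 3 - x 0 * x 5
def L3 (x : Fin 6 → ℝ) : ℝ := x 0 * x 4 - x 1 * x 3

/-- The Hamiltonian of the coupled oscillators with magnetic terms. -/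
noncomputable def Ham (b k : ℝ) (x : Fin 6 → ℝ) : ℝ :=
  (1/2) * (x 3 ^ 2 + x 4 ^ 2 + x 5 ^ 2) + b * (L1 x + L2 x + L3 x) +
  (1/2) * (b ^ 2 + k) * ((x 1 - x 0) ^ 2 + (x 2 - x 1) ^ 2 + (x 0 - x 2) ^ 2)

/-- J2 = p1 + p2 + p3. -/
def J2 (x : Fin 6 → ℝ) : ℝ := x 3 + x 4 + x 5

/-- J3 = L1 + L2 + L3. -/
def J3 (x : Fin 6 → ℝ) : ℝ := L1 x + L2 x + L3 x

def Y3a (x : Fin 6 → ℝ) : Fin 6 → ℝ := ![x 2, x 0, x 1, x 5, x 3, x 4]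

private lemma sqd {f : (Fin 6 → ℝ) → ℝ} {f' : (Fin 6 → ℝ) →L[ℝ] ℝ} {x : Fin 6 → ℝ}
    (hf : HasFDerivAt f f' x) :
    HasFDerivAt (fun y => f y ^ 2) (f x • f' + f x • f') x := by
  rw [show (fun y => f y ^ 2) = f * f from funext fun y => by simp [pow_two]]
  exact hf.mul hf

/-- The directional derivative of H along Y3ᵃ equals (1/2)J2² − H. -/
theorem stmt8 (b k : ℝ) (x : Fin 6 → ℝ) :
    fderiv ℝ (Ham b k) x (Y3a x) = (1/2) * (J2 x)^2 - Ham b k x := by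
  have P : ∀ i : Fin 6, HasFDerivAt (fun y : Fin 6 → ℝ => y i)
      (ContinuousLinearMap.proj (R := ℝ) i) x := fun i => hasFDerivAt_apply i x
  have hH : HasFDerivAt (Ham b k) _ x :=
    (((((sqd (P 3)).add (sqd (P 4))).add (sqd (P 5))).const_mul (1/2)).add
      ((((((P 1).mul (P 5)).sub ((P 2).mul (P 4))).add (((P 2).mul (P 3)).sub ((P 0).mul (P 5)))).add
        (((P 0).mul (P 4)).sub ((P 1).mul (P 3)))).const_mul b)).add
      ((((sqd ((P 1).sub (P 0))).add (sqd ((P 2).sub (P 1)))).add (sqd ((P 0).sub (P 2)))).const_mul ((1/2)*(b^2+k)))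
  rw [hH.fderiv]
  have h5 : (![x 2, x 0, x 1, x 5, x 3, x 4] : Fin 6 → ℝ) 5 = x 4 := rfl
  simp only [ContinuousLinearMap.add_apply, ContinuousLinearMap.sub_apply,
    ContinuousLinearMap.smul_apply, ContinuousLinearMap.proj_apply,
    ContinuousLinearMap.coe_smul', Pi.smul_apply, smul_eq_mul, Y3a, Ham, L1, L2, L3, J2,
    Matrix.cons_val_zero, Matrix.cons_val_one, Matrix.head_cons, Matrix.cons_val_two,
    Matrix.tail_cons, Matrix.cons_val_three, Matrix.cons_val_four, Matrix.cons_val_fin_one, h5, Pi.sub_apply]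
  ring
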